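/- For a fixed unit vector p, the pointwise gradient bound ‖∂ₓ f̄(x,p)‖ ≤ ‖w_x(x)‖ · v̄ / ((v̄ − ‖w(x)‖)^{5/2} (v̄ + ‖w(x)‖)^{1/2}) holds at every x. -/

import Mathlib

set_option maxHeartbeats 1000000
set_option synthInstance.maxHeartbeats 400000

open scoped RealInnerProductSpace

theorem slowness_gradient_bound
    (v : ℝ) (hv : 0 < v)
    (w : EuclideanSpace ℝ (Fin 2) → EuclideanSpace ℝ (Fin 2))
    (hw : ContDiff ℝ 1 w)
    (hwb : ∀ x, ‖w x‖ < v)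
    (p : EuclideanSpace ℝ (Fin 2)) (hp : ‖p‖ = 1)
    (x : EuclideanSpace ℝ (Fin 2)) :
    ‖fderiv ℝ (fun z : EuclideanSpace ℝ (Fin 2) =>
        (-⟪w z, p⟫ + Real.sqrt (v ^ 2 - ‖w z‖ ^ 2 + ⟪w z, p⟫ ^ 2)) /
          (v ^ 2 - ‖w z‖ ^ 2)) x‖ ≤
      ‖fderiv ℝ w x‖ * v /
        ((v - ‖w x‖) ^ ((5 : ℝ) / 2) * (v + ‖w x‖) ^ ((1 : ℝ) / 2)) := by
  have hk : ∀ z, 0 < v ^ 2 - ‖w z‖ ^ 2 := fun z => by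
    nlinarith [hwb z, norm_nonneg (w z)]
  have ha : ∀ z, |⟪w z, p⟫| ≤ ‖w z‖ := fun z => by
    calc |⟪w z, p⟫| ≤ ‖w z‖ * ‖p‖ := abs_real_inner_le_norm _ _
    _ = ‖w z‖ := by rw [hp, mul_one]
  have hu : ∀ z, 0 < v ^ 2 - ‖w z‖ ^ 2 + ⟪w z, p⟫ ^ 2 := fun z => by
    nlinarith [hk z, sq_nonneg ⟪w z, p⟫]
  have hs_pos : ∀ z, 0 < Real.sqrt (v ^ 2 - ‖w z‖ ^ 2 + ⟪w z, p⟫ ^ 2) :=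
    fun z => Real.sqrt_pos.2 (hu z)
  have hs_sq : ∀ z, Real.sqrt (v ^ 2 - ‖w z‖ ^ 2 + ⟪w z, p⟫ ^ 2) ^ 2
      = v ^ 2 - ‖w z‖ ^ 2 + ⟪w z, p⟫ ^ 2 := fun z => Real.sq_sqrt (hu z).le
  have hpos : ∀ z, 0 < ⟪w z, p⟫ + Real.sqrt (v ^ 2 - ‖w z‖ ^ 2 + ⟪w z, p⟫ ^ 2) := fun z => by
    have h1 := hs_sq z
    have h2 := hs_pos z
    have h3 := hk z
    nlinarith [abs_nonneg ⟪w z, p⟫, sq_abs ⟪w z, p⟫, neg_abs_le ⟪w z, p⟫]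
  have hfun : (fun z : EuclideanSpace ℝ (Fin 2) =>
        (-⟪w z, p⟫ + Real.sqrt (v ^ 2 - ‖w z‖ ^ 2 + ⟪w z, p⟫ ^ 2)) /
          (v ^ 2 - ‖w z‖ ^ 2))
      = fun z => (⟪w z, p⟫ + Real.sqrt (v ^ 2 - ‖w z‖ ^ 2 + ⟪w z, p⟫ ^ 2))⁻¹ := by
    funext z
    have h1 := (hk z).ne'
    have h2 := (hpos z).ne'
    have h3 := hs_sq z
    rw [div_eq_iff h1, inv_mul_eq_div, eq_div_iff h2]
    nlinarith [h3]
  rw [hfun]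
  set W := fderiv ℝ w x with hW
  set LA := (innerSL ℝ p).comp W with hLA
  set LC := (innerSL ℝ (w x)).comp W with hLC
  have hwd : HasFDerivAt w W x := (hw.differentiable one_ne_zero x).hasFDerivAt
  have h1 : HasFDerivAt (fun z => ⟪w z, p⟫) LA x := by
    have hcomp := ((innerSL ℝ p).hasFDerivAt (x := w x)).comp x hwd
    have heq : (⇑(innerSL ℝ p) ∘ w) = fun z => ⟪w z, p⟫ := by
      funext z
      simp only [Function.comp_apply, innerSL_apply_apply]
      exact real_inner_comm _ _
    rwa [heq] at hcomp
  have h2 : HasFDerivAt (fun z : EuclideanSpace ℝ (Fin 2) => ‖w z‖ ^ 2) ((2 : ℝ) • LC) x := by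
    have heq : (fun z : EuclideanSpace ℝ (Fin 2) => ‖w z‖ ^ 2) = fun z => ⟪w z, w z⟫ := by
      funext z; rw [real_inner_self_eq_norm_sq]
    rw [heq]
    have hin := hwd.inner ℝ hwd
    refine hin.congr_fderiv (Eq.symm ?_)
    ext h
    simp only [hLC, ContinuousLinearMap.smul_apply, ContinuousLinearMap.comp_apply,
      ContinuousLinearMap.prod_apply, fderivInnerCLM_apply, innerSL_apply_apply, smul_eq_mul]
    rw [real_inner_comm (W h) (w x)]
    ring
  have hu' : HasFDerivAt (fun z => v ^ 2 - ‖w z‖ ^ 2 + ⟪w z, p⟫ ^ 2)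
      ((-2 : ℝ) • LC + (2 * ⟪w x, p⟫) • LA) x := by
    have hpow : HasFDerivAt (fun z => ⟪w z, p⟫ ^ 2) ((2 * ⟪w x, p⟫) • LA) x := by
      have heq : (fun z => ⟪w z, p⟫ ^ 2) = fun z => ⟪w z, p⟫ * ⟪w z, p⟫ := by
        funext z; ring
      rw [heq]
      refine (h1.mul h1).congr_fderiv (Eq.symm ?_)
      ext h
      simp only [ContinuousLinearMap.smul_apply, ContinuousLinearMap.add_apply, smul_eq_mul]
      ring
    have := ((hasFDerivAt_const (v ^ 2) x).sub h2).add hpow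
    refine this.congr_fderiv (Eq.symm ?_)
    ext h
    simp only [ContinuousLinearMap.smul_apply, ContinuousLinearMap.add_apply,
      ContinuousLinearMap.sub_apply, ContinuousLinearMap.zero_apply, smul_eq_mul]
    ring
  have hS : HasFDerivAt (fun z => Real.sqrt (v ^ 2 - ‖w z‖ ^ 2 + ⟪w z, p⟫ ^ 2))
      ((1 / (2 * Real.sqrt (v ^ 2 - ‖w x‖ ^ 2 + ⟪w x, p⟫ ^ 2))) •
        ((-2 : ℝ) • LC + (2 * ⟪w x, p⟫) • LA)) x := hu'.sqrt (hu x).ne'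
  have hg : HasFDerivAt
      (fun z => (⟪w z, p⟫ + Real.sqrt (v ^ 2 - ‖w z‖ ^ 2 + ⟪w z, p⟫ ^ 2))⁻¹)
      ((-(((⟪w x, p⟫ + Real.sqrt (v ^ 2 - ‖w x‖ ^ 2 + ⟪w x, p⟫ ^ 2)) ^ 2) *
          Real.sqrt (v ^ 2 - ‖w x‖ ^ 2 + ⟪w x, p⟫ ^ 2))⁻¹) •
        ((Real.sqrt (v ^ 2 - ‖w x‖ ^ 2 + ⟪w x, p⟫ ^ 2) + ⟪w x, p⟫) • LA - LC)) x := by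
    have hsum := h1.add hS
    have hne : (⟪w x, p⟫ + Real.sqrt (v ^ 2 - ‖w x‖ ^ 2 + ⟪w x, p⟫ ^ 2)) ≠ 0 := (hpos x).ne'
    have hinv := (hasFDerivAt_inv hne).comp x hsum
    refine hinv.congr_fderiv (Eq.symm ?_)
    ext h
    have hsne : Real.sqrt (v ^ 2 - ‖w x‖ ^ 2 + ⟪w x, p⟫ ^ 2) ≠ 0 := (hs_pos x).ne'
    have hane : ⟪w x, p⟫ + Real.sqrt (v ^ 2 - ‖w x‖ ^ 2 + ⟪w x, p⟫ ^ 2) ≠ 0 := (hpos x).ne'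
    simp only [ContinuousLinearMap.smul_apply, ContinuousLinearMap.comp_apply,
      ContinuousLinearMap.add_apply, ContinuousLinearMap.sub_apply,
      ContinuousLinearMap.smulRight_apply, ContinuousLinearMap.one_apply, smul_eq_mul,
      ContinuousLinearMap.toSpanSingleton_apply,
      Function.comp_apply]
    have hs2 := hs_sq x
    clear hfun h1 h2 hu' hS hsum hinv hwd
    generalize hA : (⟪w x, p⟫ : ℝ) = aa at hsne hane hs2 ⊢
    generalize hSS : Real.sqrt (v ^ 2 - ‖w x‖ ^ 2 + aa ^ 2) = S at hsne hane hs2 ⊢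
    generalize LA h = A
    generalize LC h = C
    have hD : S * aa ^ 2 + S ^ 2 * aa * 2 + S ^ 3 ≠ 0 := by
      have hfac : S * aa ^ 2 + S ^ 2 * aa * 2 + S ^ 3 = S * (aa + S) ^ 2 := by ring
      rw [hfac]
      exact mul_ne_zero hsne (pow_ne_zero _ hane)
    field_simp [hD]
    ring
  rw [hg.fderiv]
  set a := (⟪w x, p⟫ : ℝ) with ha''
  set k := ‖w x‖ with hk''
  set s := Real.sqrt (v ^ 2 - k ^ 2 + a ^ 2) with hs''
  have hk0 : 0 ≤ k := norm_nonneg _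
  have hkv : k < v := hwb x
  have hax : |a| ≤ k := ha x
  have hs0 : 0 < s := hs_pos x
  have hs2 : s ^ 2 = v ^ 2 - k ^ 2 + a ^ 2 := hs_sq x
  have h7 : 0 < a + s := hpos x
  have hak : a ^ 2 ≤ k ^ 2 := by nlinarith [hax, abs_nonneg a, sq_abs a]
  have hsv : s ≤ v := by nlinarith [hs2, hs0, hv]
  have hta : v - k ≤ a + s := by
    have h5 : -k ≤ a := (abs_le.1 hax).1
    nlinarith [mul_nonneg (by linarith : (0:ℝ) ≤ v + k - (s - a)) h7.le, hs2]
  have hvk0 : 0 < v - k := by linarith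
  have hvk1 : 0 < v + k := by linarith
  set σ := Real.sqrt ((v - k) * (v + k)) with hσ''
  have hσ0 : 0 < σ := Real.sqrt_pos.2 (by positivity)
  have hσs : σ ≤ s := by
    rw [hσ'', hs'']
    exact Real.sqrt_le_sqrt (by nlinarith [sq_nonneg a])
  have hWA : ‖LA‖ ≤ ‖W‖ := by
    calc ‖LA‖ ≤ ‖innerSL ℝ p‖ * ‖W‖ := ContinuousLinearMap.opNorm_comp_le _ _
    _ = ‖W‖ := by rw [innerSL_apply_norm, hp, one_mul]
  have hWC : ‖LC‖ ≤ k * ‖W‖ := by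
    calc ‖LC‖ ≤ ‖innerSL ℝ (w x)‖ * ‖W‖ := ContinuousLinearMap.opNorm_comp_le _ _
    _ = k * ‖W‖ := by rw [innerSL_apply_norm]
  have hNorm : ‖(s + a) • LA - LC‖ ≤ (s + a) * ‖W‖ + k * ‖W‖ := by
    calc ‖(s + a) • LA - LC‖ ≤ ‖(s + a) • LA‖ + ‖LC‖ := norm_sub_le _ _
    _ = |s + a| * ‖LA‖ + ‖LC‖ := by
        rw [norm_smul (s + a) LA, Real.norm_eq_abs]
    _ ≤ (s + a) * ‖W‖ + k * ‖W‖ := by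
        rw [abs_of_pos (by linarith : (0:ℝ) < s + a)]
        exact add_le_add (mul_le_mul_of_nonneg_left hWA (by linarith)) hWC
  rw [norm_smul (-((a + s) ^ 2 * s)⁻¹) ((s + a) • LA - LC), Real.norm_eq_abs, abs_neg, abs_inv,
    abs_of_pos (mul_pos (pow_pos h7 2) hs0)]
  have hrw : (v - k) ^ ((5:ℝ)/2) * (v + k) ^ ((1:ℝ)/2) = (v - k) ^ 2 * σ := by
    have h1 : ((5:ℝ)/2) = ((2:ℕ) : ℝ) + (1/2 : ℝ) := by norm_num
    rw [h1, Real.rpow_add hvk0, Real.rpow_natCast, hσ'',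
      Real.sqrt_eq_rpow, Real.mul_rpow hvk0.le hvk1.le]
    ring
  rw [hrw]
  calc ((a + s) ^ 2 * s)⁻¹ * ‖(s + a) • LA - LC‖
      ≤ ((a + s) ^ 2 * s)⁻¹ * ((s + a) * ‖W‖ + k * ‖W‖) := by
        exact mul_le_mul_of_nonneg_left hNorm (by positivity)
    _ = ((s + a + k) * ‖W‖) / ((a + s) ^ 2 * s) := by
        field_simp
    _ ≤ ‖W‖ * v / ((v - k) ^ 2 * σ) := by
        rw [div_le_div_iff₀ (mul_pos (pow_pos h7 2) hs0) (by positivity)]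
        have key1 : (s + a + k) * (v - k) ^ 2 ≤ v * (a + s) ^ 2 := by
          nlinarith [mul_nonneg (by linarith : (0:ℝ) ≤ a + s - (v - k))
              (by positivity : (0:ℝ) ≤ (v - k) * (v + k)),
            mul_nonneg hv.le (sq_nonneg (a + s - (v - k)))]
        calc (s + a + k) * ‖W‖ * ((v - k) ^ 2 * σ)
            = ((s + a + k) * (v - k) ^ 2 * σ) * ‖W‖ := by ring
          _ ≤ (v * (a + s) ^ 2 * σ) * ‖W‖ :=
              mul_le_mul_of_nonneg_right
                (mul_le_mul_of_nonneg_right key1 hσ0.le) (norm_nonneg _)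
          _ ≤ (v * (a + s) ^ 2 * s) * ‖W‖ :=
              mul_le_mul_of_nonneg_right
                (mul_le_mul_of_nonneg_left hσs (by positivity)) (norm_nonneg _)
          _ = ‖W‖ * v * ((a + s) ^ 2 * s) := by ring
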